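/- For parameters θ_k, φ_k ∈ ℝ, define W_k := R_𝔥(θ_k) U* R_𝔨(φ_k) U. Then for every n ≥ 0 there exist polynomials Π_n, Φ_n with complex coefficients such that ∏_{k=1}^n W_k = [[Π_n(A*A), i Φ_n(A*A) A*B],[i Φ̄_n(D*D) B*A, Π̄_n(D*D)]] on 𝔥 ⊕ 𝔥^⊥, where Π_0 ≡ 1, Φ_0 ≡ 0, and the polynomials satisfy the recursion Π_n(x) = P_n(x) Π_{n−1}(x) − Q_n(x) Φ̄_{n−1}(x)(1−x)x and Φ_n(x) = P_n(x) Φ_{n−1}(x) + Q_n(x) Π̄_{n−1}(x), with P_n(x) = e^{iθ_n}(e^{-iφ_n} + 2i sin(φ_n) x) and Q_n(x) = 2 e^{iθ_n} sin(φ_n). -/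

import Mathlib

set_option maxHeartbeats 4000000

private lemma pmap_conj_conj (p : Polynomial ℂ) :
    (p.map (starRingEnd ℂ)).map (starRingEnd ℂ) = p := by
  rw [Polynomial.map_map]
  have h : (starRingEnd ℂ).comp (starRingEnd ℂ) = RingHom.id ℂ :=
    RingHom.ext fun x => Complex.conj_conj x
  rw [h, Polynomial.map_id]

private lemma exp_twist (r : ℝ) :
    Complex.exp (r * Complex.I) = Complex.exp (-r * Complex.I) + 2 * Complex.I * Real.sin r := by
  rw [Complex.exp_mul_I, Complex.exp_mul_I]
  push_cast
  simp [Complex.cos_neg, Complex.sin_neg]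
  ring

private lemma conj_exp_real (r : ℝ) :
    (starRingEnd ℂ) (Complex.exp (r * Complex.I)) = Complex.exp (-r * Complex.I) := by
  rw [← Complex.exp_conj]
  congr 1
  simp [map_mul, Complex.conj_ofReal]

open ContinuousLinearMap Complex Submodule Polynomial in
theorem stmt6
    {H : Type*} [NormedAddCommGroup H] [InnerProductSpace ℂ H] [CompleteSpace H]
    (𝔥 𝔨 : Submodule ℂ H) [CompleteSpace 𝔥] [CompleteSpace 𝔨]
    (U : H →L[ℂ] H) (hU1 : adjoint U ∘L U = 1) (hU2 : U ∘L adjoint U = 1)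
    (A : 𝔥 →L[ℂ] 𝔨) (B : 𝔥ᗮ →L[ℂ] 𝔨) (C : 𝔥 →L[ℂ] 𝔨ᗮ) (D : 𝔥ᗮ →L[ℂ] 𝔨ᗮ)
    (hA : ∀ x : 𝔥, A x = orthogonalProjection 𝔨 (U x))
    (hB : ∀ y : 𝔥ᗮ, B y = orthogonalProjection 𝔨 (U y))
    (hC : ∀ x : 𝔥, C x = orthogonalProjection 𝔨ᗮ (U x))
    (hD : ∀ y : 𝔥ᗮ, D y = orthogonalProjection 𝔨ᗮ (U y))
    (θ φ : ℕ → ℝ) (W Wn : ℕ → (H →L[ℂ] H))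
    (hWdef : ∀ k, W k = (Complex.exp (θ k * Complex.I) • (𝔥.subtypeL ∘L orthogonalProjection 𝔥) +
          Complex.exp (-θ k * Complex.I) • (1 - 𝔥.subtypeL ∘L orthogonalProjection 𝔥)) ∘L
        (adjoint U ∘L
          ((Complex.exp (φ k * Complex.I) • (𝔨.subtypeL ∘L orthogonalProjection 𝔨) +
            Complex.exp (-φ k * Complex.I) • (1 - 𝔨.subtypeL ∘L orthogonalProjection 𝔨)) ∘L U)))
    (hWn0 : Wn 0 = 1) (hWnS : ∀ n, Wn (n + 1) = W (n + 1) ∘L Wn n)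
    (Pp Qp : ℕ → Polynomial ℂ)
    (hPp : ∀ n, Pp n = Polynomial.C (Complex.exp (θ n * Complex.I) * Complex.exp (-φ n * Complex.I)) +
      Polynomial.C (Complex.exp (θ n * Complex.I) * (2 * Complex.I * Real.sin (φ n))) * Polynomial.X)
    (hQp : ∀ n, Qp n = Polynomial.C (2 * Complex.exp (θ n * Complex.I) * Real.sin (φ n))) :
    ∃ Pi' Φ' : ℕ → Polynomial ℂ,
      Pi' 0 = 1 ∧ Φ' 0 = 0 ∧
      (∀ n : ℕ, 1 ≤ n → Pi' n = Pp n * Pi' (n - 1) -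
        Qp n * (Φ' (n - 1)).map (starRingEnd ℂ) * (1 - Polynomial.X) * Polynomial.X) ∧
      (∀ n : ℕ, 1 ≤ n → Φ' n = Pp n * Φ' (n - 1) +
        Qp n * (Pi' (n - 1)).map (starRingEnd ℂ)) ∧
      (∀ n : ℕ, ∀ x : 𝔥, ∀ y : 𝔥ᗮ,
      Wn n ((x : H) + (y : H)) =
        ((Polynomial.aeval (adjoint A ∘L A) (Pi' n) x +
          (Complex.I • (Polynomial.aeval (adjoint A ∘L A) (Φ' n) ∘L (adjoint A ∘L B))) y : 𝔥) : H) +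
        (((Complex.I • (Polynomial.aeval (adjoint D ∘L D) ((Φ' n).map (starRingEnd ℂ)) ∘L
            (adjoint B ∘L A))) x +
          Polynomial.aeval (adjoint D ∘L D) ((Pi' n).map (starRingEnd ℂ)) y : 𝔥ᗮ) : H)) := by
  classical
  set T : 𝔥 →L[ℂ] 𝔥 := adjoint A ∘L A with hT
  set S : 𝔥ᗮ →L[ℂ] 𝔥ᗮ := adjoint D ∘L D with hS
  have hTapp : ∀ x : 𝔥, T x = adjoint A (A x) := fun x => rfl
  have hSapp : ∀ w : 𝔥ᗮ, S w = adjoint D (D w) := fun w => rfl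
  -- basic unitarity
  have hU1' : ∀ v : H, adjoint U (U v) = v := fun v => by
    have := congrArg (fun (f : H →L[ℂ] H) => f v) hU1; simpa using this
  have hU2' : ∀ v : H, U (adjoint U v) = v := fun v => by
    have := congrArg (fun (f : H →L[ℂ] H) => f v) hU2; simpa using this
  -- adjoint block formulas
  have hA' : ∀ k : 𝔨, adjoint A k = orthogonalProjection 𝔥 (adjoint U k) := by
    intro k
    apply ext_inner_right ℂ
    intro x
    rw [ContinuousLinearMap.adjoint_inner_left, hA]
    simp [Submodule.coe_inner, ContinuousLinearMap.adjoint_inner_left]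
  have hB' : ∀ k : 𝔨, adjoint B k = orthogonalProjection 𝔥ᗮ (adjoint U k) := by
    intro k
    apply ext_inner_right ℂ
    intro x
    rw [ContinuousLinearMap.adjoint_inner_left, hB]
    simp [Submodule.coe_inner, ContinuousLinearMap.adjoint_inner_left]
  have hC' : ∀ m : 𝔨ᗮ, adjoint C m = orthogonalProjection 𝔥 (adjoint U m) := by
    intro m
    apply ext_inner_right ℂ
    intro x
    rw [ContinuousLinearMap.adjoint_inner_left, hC]
    simp [Submodule.coe_inner, ContinuousLinearMap.adjoint_inner_left]
  have hD' : ∀ m : 𝔨ᗮ, adjoint D m = orthogonalProjection 𝔥ᗮ (adjoint U m) := by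
    intro m
    apply ext_inner_right ℂ
    intro x
    rw [ContinuousLinearMap.adjoint_inner_left, hD]
    simp [Submodule.coe_inner, ContinuousLinearMap.adjoint_inner_left]
  -- decompositions
  have decU : ∀ x : 𝔥, U x = (A x : H) + (C x : H) := by
    intro x
    rw [hA, hC]
    rw [← Submodule.starProjection_apply, ← Submodule.starProjection_apply]
    exact (Submodule.starProjection_add_starProjection_orthogonal (K := 𝔨) (U x)).symm
  have decU' : ∀ y : 𝔥ᗮ, U y = (B y : H) + (D y : H) := by
    intro y
    rw [hB, hD]
    rw [← Submodule.starProjection_apply, ← Submodule.starProjection_apply]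
    exact (Submodule.starProjection_add_starProjection_orthogonal (K := 𝔨) (U y)).symm
  have decV : ∀ k : 𝔨, adjoint U k = (adjoint A k : H) + (adjoint B k : H) := by
    intro k
    rw [hA', hB']
    rw [← Submodule.starProjection_apply, ← Submodule.starProjection_apply]
    exact (Submodule.starProjection_add_starProjection_orthogonal (K := 𝔥) (adjoint U k)).symm
  have decV' : ∀ m : 𝔨ᗮ, adjoint U m = (adjoint C m : H) + (adjoint D m : H) := by
    intro m
    rw [hC', hD']
    rw [← Submodule.starProjection_apply, ← Submodule.starProjection_apply]
    exact (Submodule.starProjection_add_starProjection_orthogonal (K := 𝔥) (adjoint U m)).symm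
  have uniq : ∀ (a a' : 𝔥) (b b' : 𝔥ᗮ), (a : H) + b = (a' : H) + b' → a = a' ∧ b = b' := by
    intro a a' b b' h
    constructor
    · have := congrArg (orthogonalProjection 𝔥) h
      simpa [orthogonalProjection_mem_subspace_eq_self,
        orthogonalProjection_mem_subspace_orthogonalComplement_eq_zero (b.2),
        orthogonalProjection_mem_subspace_orthogonalComplement_eq_zero (b'.2)] using this
    · have := congrArg (orthogonalProjection 𝔥ᗮ) h
      simpa [orthogonalProjection_mem_subspace_eq_self,
        Submodule.orthogonalProjectionOnto_orthogonal_apply_eq_zero (a.2),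
        Submodule.orthogonalProjectionOnto_orthogonal_apply_eq_zero (a'.2)] using this
  have uniqK : ∀ (a a' : 𝔨) (b b' : 𝔨ᗮ), (a : H) + b = (a' : H) + b' → a = a' ∧ b = b' := by
    intro a a' b b' h
    constructor
    · have := congrArg (orthogonalProjection 𝔨) h
      simpa [orthogonalProjection_mem_subspace_eq_self,
        orthogonalProjection_mem_subspace_orthogonalComplement_eq_zero (b.2),
        orthogonalProjection_mem_subspace_orthogonalComplement_eq_zero (b'.2)] using this
    · have := congrArg (orthogonalProjection 𝔨ᗮ) h
      simpa [orthogonalProjection_mem_subspace_eq_self,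
        Submodule.orthogonalProjectionOnto_orthogonal_apply_eq_zero (a.2),
        Submodule.orthogonalProjectionOnto_orthogonal_apply_eq_zero (a'.2)] using this
  -- block identities of unitarity
  have key1 : ∀ x : 𝔥, ((adjoint A (A x) + adjoint C (C x) : 𝔥) : H)
      + ((adjoint B (A x) + adjoint D (C x) : 𝔥ᗮ) : H) = (x : H) + ((0 : 𝔥ᗮ) : H) := by
    intro x
    have h := hU1' (x : H)
    rw [decU x] at h
    rw [map_add, decV (A x), decV' (C x)] at h
    rw [← h]
    push_cast
    abel
  have id1 : ∀ x : 𝔥, adjoint A (A x) + adjoint C (C x) = x :=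
    fun x => (uniq _ _ _ _ (key1 x)).1
  have id2 : ∀ x : 𝔥, adjoint B (A x) + adjoint D (C x) = 0 :=
    fun x => (uniq _ _ _ _ (key1 x)).2
  have key2 : ∀ y : 𝔥ᗮ, ((adjoint A (B y) + adjoint C (D y) : 𝔥) : H)
      + ((adjoint B (B y) + adjoint D (D y) : 𝔥ᗮ) : H) = ((0 : 𝔥) : H) + (y : H) := by
    intro y
    have h := hU1' (y : H)
    rw [decU' y] at h
    rw [map_add, decV (B y), decV' (D y)] at h
    rw [← h]
    push_cast
    abel
  have id3 : ∀ y : 𝔥ᗮ, adjoint A (B y) + adjoint C (D y) = 0 :=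
    fun y => (uniq _ _ _ _ (key2 y)).1
  have id4 : ∀ y : 𝔥ᗮ, adjoint B (B y) + adjoint D (D y) = y :=
    fun y => (uniq _ _ _ _ (key2 y)).2
  have id5 : ∀ k : 𝔨, A (adjoint A k) + B (adjoint B k) = k := by
    intro k
    have h := hU2' (k : H)
    rw [decV k, map_add, decU (adjoint A k), decU' (adjoint B k)] at h
    have h' : ((A (adjoint A k) + B (adjoint B k) : 𝔨) : H)
        + ((C (adjoint A k) + D (adjoint B k) : 𝔨ᗮ) : H) = (k : H) + ((0 : 𝔨ᗮ) : H) := by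
      rw [← h]; push_cast; abel
    exact (uniqK _ _ _ _ h').1
  -- subtraction forms
  have e5A : ∀ k : 𝔨, A (adjoint A k) = k - B (adjoint B k) := fun k => eq_sub_of_add_eq (id5 k)
  have e5B : ∀ k : 𝔨, B (adjoint B k) = k - A (adjoint A k) := fun k => eq_sub_of_add_eq' (id5 k)
  have e4B : ∀ w : 𝔥ᗮ, adjoint B (B w) = w - S w := by
    intro w; rw [hSapp]; exact eq_sub_of_add_eq (id4 w)
  have e4D : ∀ w : 𝔥ᗮ, adjoint D (D w) = w - adjoint B (B w) := fun w => eq_sub_of_add_eq' (id4 w)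
  have eC1 : ∀ x : 𝔥, adjoint C (C x) = x - adjoint A (A x) := fun x => eq_sub_of_add_eq' (id1 x)
  have eC2 : ∀ y : 𝔥ᗮ, adjoint C (D y) = - adjoint A (B y) :=
    fun y => eq_neg_of_add_eq_zero_right (id3 y)
  have eD1 : ∀ x : 𝔥, adjoint D (C x) = - adjoint B (A x) :=
    fun x => eq_neg_of_add_eq_zero_right (id2 x)
  -- intertwining relations
  have comm1 : (adjoint A ∘L B) ∘L S = T ∘L (adjoint A ∘L B) := by
    refine ContinuousLinearMap.ext fun y => ?_
    simp only [ContinuousLinearMap.comp_apply]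
    rw [hSapp, e4D]
    simp only [map_sub]
    rw [e5B (B y)]
    simp only [map_sub, hTapp]
    abel
  have comm2 : (adjoint B ∘L A) ∘L T = S ∘L (adjoint B ∘L A) := by
    refine ContinuousLinearMap.ext fun x => ?_
    simp only [ContinuousLinearMap.comp_apply]
    rw [hTapp, e5A (A x)]
    simp only [map_sub]
    rw [e4B (adjoint B (A x))]
    abel
  have prod1 : (adjoint A ∘L B) ∘L (adjoint B ∘L A) = T - T ∘L T := by
    refine ContinuousLinearMap.ext fun x => ?_
    simp only [ContinuousLinearMap.comp_apply, ContinuousLinearMap.sub_apply]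
    rw [e5B (A x)]
    simp only [map_sub, hTapp]
  have prod2 : (adjoint B ∘L A) ∘L (adjoint A ∘L B) = S - S ∘L S := by
    refine ContinuousLinearMap.ext fun y => ?_
    simp only [ContinuousLinearMap.comp_apply, ContinuousLinearMap.sub_apply]
    rw [e5A (B y)]
    simp only [map_sub, e4B]
    abel
  have pow1 : ∀ n : ℕ, (adjoint A ∘L B) ∘L (S ^ n) = (T ^ n) ∘L (adjoint A ∘L B) := by
    intro n
    induction n with
    | zero => simp [ContinuousLinearMap.one_def]
    | succ k ih =>
        rw [pow_succ, pow_succ, ContinuousLinearMap.mul_def, ContinuousLinearMap.mul_def,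
          ← ContinuousLinearMap.comp_assoc, ih, ContinuousLinearMap.comp_assoc, comm1,
          ← ContinuousLinearMap.comp_assoc]
  have pow2 : ∀ n : ℕ, (adjoint B ∘L A) ∘L (T ^ n) = (S ^ n) ∘L (adjoint B ∘L A) := by
    intro n
    induction n with
    | zero => simp [ContinuousLinearMap.one_def]
    | succ k ih =>
        rw [pow_succ, pow_succ, ContinuousLinearMap.mul_def, ContinuousLinearMap.mul_def,
          ← ContinuousLinearMap.comp_assoc, ih, ContinuousLinearMap.comp_assoc, comm2,
          ← ContinuousLinearMap.comp_assoc]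
  have commP1 : ∀ p : Polynomial ℂ,
      (adjoint A ∘L B) ∘L (aeval S p) = (aeval T p) ∘L (adjoint A ∘L B) := by
    intro p
    induction p using Polynomial.induction_on' with
    | add p q hp hq => rw [map_add, map_add, ContinuousLinearMap.comp_add,
        ContinuousLinearMap.add_comp, hp, hq]
    | monomial n a =>
        rw [Polynomial.aeval_monomial, Polynomial.aeval_monomial, ← Algebra.smul_def,
          ← Algebra.smul_def, ContinuousLinearMap.comp_smul, pow1, ContinuousLinearMap.smul_comp]
  have commP2 : ∀ p : Polynomial ℂ,
      (adjoint B ∘L A) ∘L (aeval T p) = (aeval S p) ∘L (adjoint B ∘L A) := by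
    intro p
    induction p using Polynomial.induction_on' with
    | add p q hp hq => rw [map_add, map_add, ContinuousLinearMap.comp_add,
        ContinuousLinearMap.add_comp, hp, hq]
    | monomial n a =>
        rw [Polynomial.aeval_monomial, Polynomial.aeval_monomial, ← Algebra.smul_def,
          ← Algebra.smul_def, ContinuousLinearMap.comp_smul, pow2, ContinuousLinearMap.smul_comp]
  -- pointwise versions
  have commP1' : ∀ (p : Polynomial ℂ) (w : 𝔥ᗮ),
      adjoint A (B ((aeval S p) w)) = (aeval T p) (adjoint A (B w)) := by
    intro p w
    have := ContinuousLinearMap.ext_iff.mp (commP1 p) w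
    simpa [ContinuousLinearMap.comp_apply] using this
  have commP2' : ∀ (p : Polynomial ℂ) (w : 𝔥),
      adjoint B (A ((aeval T p) w)) = (aeval S p) (adjoint B (A w)) := by
    intro p w
    have := ContinuousLinearMap.ext_iff.mp (commP2 p) w
    simpa [ContinuousLinearMap.comp_apply] using this
  have gaev1 : aeval T (((1 : Polynomial ℂ) - Polynomial.X) * Polynomial.X) = T - T ∘L T := by
    rw [map_mul, map_sub, map_one, Polynomial.aeval_X, ← ContinuousLinearMap.mul_def, sub_mul, one_mul]
  have gaev2 : aeval S (((1 : Polynomial ℂ) - Polynomial.X) * Polynomial.X) = S - S ∘L S := by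
    rw [map_mul, map_sub, map_one, Polynomial.aeval_X, ← ContinuousLinearMap.mul_def, sub_mul, one_mul]
  have prod1' : ∀ x : 𝔥, adjoint A (B (adjoint B (A x)))
      = (aeval T (((1 : Polynomial ℂ) - Polynomial.X) * Polynomial.X)) x := by
    intro x
    rw [gaev1]
    have := ContinuousLinearMap.ext_iff.mp prod1 x
    simpa [ContinuousLinearMap.comp_apply] using this
  have prod2' : ∀ y : 𝔥ᗮ, adjoint B (A (adjoint A (B y)))
      = (aeval S (((1 : Polynomial ℂ) - Polynomial.X) * Polynomial.X)) y := by
    intro y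
    rw [gaev2]
    have := ContinuousLinearMap.ext_iff.mp prod2 y
    simpa [ContinuousLinearMap.comp_apply] using this
  have aevmulT : ∀ (p q : Polynomial ℂ) (x : 𝔥),
      aeval T (p * q) x = aeval T p (aeval T q x) := by
    intro p q x
    rw [map_mul, ContinuousLinearMap.mul_apply]
  have aevmulS : ∀ (p q : Polynomial ℂ) (y : 𝔥ᗮ),
      aeval S (p * q) y = aeval S p (aeval S q y) := by
    intro p q y
    rw [map_mul, ContinuousLinearMap.mul_apply]
  -- evaluation of the step polynomials
  have e4S : ∀ w : 𝔥ᗮ, S w = w - adjoint B (B w) := by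
    intro w; rw [e4B]; abel
  have cexp1 : ∀ r : ℝ, (starRingEnd ℂ) (Complex.exp (r * Complex.I)) = Complex.exp (-r * Complex.I) :=
    conj_exp_real
  have cexp2 : ∀ r : ℝ, (starRingEnd ℂ) (Complex.exp (-r * Complex.I)) = Complex.exp (r * Complex.I) := by
    intro r
    rw [← Complex.exp_conj]
    congr 1
    rw [map_mul, map_neg, Complex.conj_ofReal, Complex.conj_I]
    ring
  have aevPpT : ∀ (k : ℕ) (x : 𝔥), aeval T (Pp k) x =
      (Complex.exp (θ k * Complex.I) * Complex.exp (-φ k * Complex.I)) • x +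
      (Complex.exp (θ k * Complex.I) * (2 * Complex.I * Real.sin (φ k))) • (adjoint A (A x)) := by
    intro k x
    rw [hPp, Polynomial.aeval_add, Polynomial.aeval_mul, Polynomial.aeval_C, Polynomial.aeval_C,
      Polynomial.aeval_X,
      ← Algebra.smul_def, Algebra.algebraMap_eq_smul_one, ContinuousLinearMap.add_apply,
      ContinuousLinearMap.smul_apply, ContinuousLinearMap.smul_apply,
      ContinuousLinearMap.one_apply, hTapp]
  have aevQpT : ∀ (k : ℕ) (w : 𝔥), aeval T (Qp k) w =
      (2 * Complex.exp (θ k * Complex.I) * Real.sin (φ k)) • w := by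
    intro k w
    rw [hQp, Polynomial.aeval_C, Algebra.algebraMap_eq_smul_one,
      ContinuousLinearMap.smul_apply, ContinuousLinearMap.one_apply]
  have aevQpS : ∀ (k : ℕ) (w : 𝔥ᗮ), aeval S ((Qp k).map (starRingEnd ℂ)) w =
      (2 * Complex.exp (-θ k * Complex.I) * Real.sin (φ k)) • w := by
    intro k w
    rw [hQp, Polynomial.map_C, Polynomial.aeval_C, Algebra.algebraMap_eq_smul_one,
      ContinuousLinearMap.smul_apply, ContinuousLinearMap.one_apply]
    congr 1
    simp [map_mul, cexp1, ← Complex.sin_conj, Complex.conj_ofReal, map_ofNat]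
  have aevPpS : ∀ (k : ℕ) (w : 𝔥ᗮ), aeval S ((Pp k).map (starRingEnd ℂ)) w =
      (Complex.exp (-θ k * Complex.I) * Complex.exp (φ k * Complex.I)) • w -
      (Complex.exp (-θ k * Complex.I) * (2 * Complex.I * Real.sin (φ k))) • (S w) := by
    intro k w
    rw [hPp, Polynomial.map_add, Polynomial.map_mul, Polynomial.map_C, Polynomial.map_C,
      Polynomial.map_X, Polynomial.aeval_add, Polynomial.aeval_mul, Polynomial.aeval_C,
      Polynomial.aeval_C,
      Polynomial.aeval_X, ← Algebra.smul_def, Algebra.algebraMap_eq_smul_one,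
      ContinuousLinearMap.add_apply, ContinuousLinearMap.smul_apply,
      ContinuousLinearMap.smul_apply, ContinuousLinearMap.one_apply]
    have c1 : (starRingEnd ℂ) (Complex.exp (θ k * Complex.I) * Complex.exp (-φ k * Complex.I)) =
        Complex.exp (-θ k * Complex.I) * Complex.exp (φ k * Complex.I) := by
      rw [map_mul, cexp1, cexp2]
    have c2 : (starRingEnd ℂ) (Complex.exp (θ k * Complex.I) * (2 * Complex.I * Real.sin (φ k))) =
        -(Complex.exp (-θ k * Complex.I) * (2 * Complex.I * Real.sin (φ k))) := by
      rw [map_mul, cexp1]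
      simp [map_mul, Complex.conj_I, ← Complex.sin_conj, Complex.conj_ofReal, map_ofNat]
    rw [c1, c2, neg_smul]
    abel
  -- projection helper lemmas
  have Rk_mem : ∀ (c c' : ℂ) (k0 : 𝔨),
      (c • (𝔨.subtypeL ∘L orthogonalProjection 𝔨) +
        c' • (1 - 𝔨.subtypeL ∘L orthogonalProjection 𝔨)) (k0 : H) = c • (k0 : H) := by
    intro c c' k0
    simp [ContinuousLinearMap.add_apply, ContinuousLinearMap.smul_apply,
      ContinuousLinearMap.sub_apply, ContinuousLinearMap.comp_apply,
      ContinuousLinearMap.one_apply, orthogonalProjection_mem_subspace_eq_self]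
  have Rk_memp : ∀ (c c' : ℂ) (m0 : 𝔨ᗮ),
      (c • (𝔨.subtypeL ∘L orthogonalProjection 𝔨) +
        c' • (1 - 𝔨.subtypeL ∘L orthogonalProjection 𝔨)) (m0 : H) = c' • (m0 : H) := by
    intro c c' m0
    simp [ContinuousLinearMap.add_apply, ContinuousLinearMap.smul_apply,
      ContinuousLinearMap.sub_apply, ContinuousLinearMap.comp_apply,
      ContinuousLinearMap.one_apply,
      orthogonalProjection_mem_subspace_orthogonalComplement_eq_zero m0.2]
  have Rh_mem : ∀ (c c' : ℂ) (a : 𝔥),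
      (c • (𝔥.subtypeL ∘L orthogonalProjection 𝔥) +
        c' • (1 - 𝔥.subtypeL ∘L orthogonalProjection 𝔥)) (a : H) = c • (a : H) := by
    intro c c' a
    simp [ContinuousLinearMap.add_apply, ContinuousLinearMap.smul_apply,
      ContinuousLinearMap.sub_apply, ContinuousLinearMap.comp_apply,
      ContinuousLinearMap.one_apply, orthogonalProjection_mem_subspace_eq_self]
  have Rh_memp : ∀ (c c' : ℂ) (b : 𝔥ᗮ),
      (c • (𝔥.subtypeL ∘L orthogonalProjection 𝔥) +
        c' • (1 - 𝔥.subtypeL ∘L orthogonalProjection 𝔥)) (b : H) = c' • (b : H) := by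
    intro c c' b
    simp [ContinuousLinearMap.add_apply, ContinuousLinearMap.smul_apply,
      ContinuousLinearMap.sub_apply, ContinuousLinearMap.comp_apply,
      ContinuousLinearMap.one_apply,
      orthogonalProjection_mem_subspace_orthogonalComplement_eq_zero b.2]
  -- the one-step formula
  have hstep : ∀ (k : ℕ) (x : 𝔥) (y : 𝔥ᗮ),
      W k ((x : H) + (y : H)) =
        ((aeval T (Pp k) x + Complex.I • aeval T (Qp k) (adjoint A (B y)) : 𝔥) : H) +
        ((Complex.I • aeval S ((Qp k).map (starRingEnd ℂ)) (adjoint B (A x)) +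
          aeval S ((Pp k).map (starRingEnd ℂ)) y : 𝔥ᗮ) : H) := by
    intro k x y
    rw [hWdef k]
    simp only [ContinuousLinearMap.comp_apply]
    simp only [map_add, map_smul, decU, decU', Rk_mem, Rk_memp, decV, decV', smul_add,
      Rh_mem, Rh_memp]
    rw [eC1, eC2, eD1, e4D]
    rw [aevPpT, aevQpT, aevQpS, aevPpS, e4S]
    push_cast
    rw [exp_twist (φ k)]
    module
  -- inductive-step component computations
  have comp1 : ∀ (P Q p f : Polynomial ℂ) (x : 𝔥) (y : 𝔥ᗮ),
      aeval T P (aeval T p x + Complex.I • aeval T f (adjoint A (B y))) +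
        Complex.I • aeval T Q (adjoint A (B
          (Complex.I • aeval S (f.map (starRingEnd ℂ)) (adjoint B (A x)) +
            aeval S (p.map (starRingEnd ℂ)) y))) =
      aeval T (P * p - Q * (f.map (starRingEnd ℂ)) * ((1 : Polynomial ℂ) - Polynomial.X) *
          Polynomial.X) x +
        Complex.I • aeval T (P * f + Q * (p.map (starRingEnd ℂ))) (adjoint A (B y)) := by
    intro P Q p f x y
    have hrearr : Q * (f.map (starRingEnd ℂ)) * ((1 : Polynomial ℂ) - Polynomial.X) *
        Polynomial.X = Q * ((f.map (starRingEnd ℂ)) * (((1 : Polynomial ℂ) - Polynomial.X) *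
        Polynomial.X)) := by ring
    rw [map_sub, hrearr]
    simp only [map_add, map_smul, smul_add, aevmulT, ContinuousLinearMap.sub_apply,
      ContinuousLinearMap.add_apply]
    rw [commP1' (f.map (starRingEnd ℂ)), commP1' (p.map (starRingEnd ℂ)), prod1' x]
    simp only [map_add, map_smul, smul_add, aevmulT, ContinuousLinearMap.sub_apply,
      ContinuousLinearMap.add_apply, smul_smul, Complex.I_mul_I, neg_one_smul, neg_smul, one_smul]
    abel
  have comp2 : ∀ (P Q p f : Polynomial ℂ) (x : 𝔥) (y : 𝔥ᗮ),
      Complex.I • aeval S (Q.map (starRingEnd ℂ)) (adjoint B (A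
          (aeval T p x + Complex.I • aeval T f (adjoint A (B y))))) +
        aeval S (P.map (starRingEnd ℂ))
          (Complex.I • aeval S (f.map (starRingEnd ℂ)) (adjoint B (A x)) +
            aeval S (p.map (starRingEnd ℂ)) y) =
      Complex.I • aeval S ((P * f + Q * (p.map (starRingEnd ℂ))).map (starRingEnd ℂ))
          (adjoint B (A x)) +
        aeval S ((P * p - Q * (f.map (starRingEnd ℂ)) * ((1 : Polynomial ℂ) - Polynomial.X) *
          Polynomial.X).map (starRingEnd ℂ)) y := by
    intro P Q p f x y
    have hrearr : Q * (f.map (starRingEnd ℂ)) * ((1 : Polynomial ℂ) - Polynomial.X) *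
        Polynomial.X = Q * ((f.map (starRingEnd ℂ)) * (((1 : Polynomial ℂ) - Polynomial.X) *
        Polynomial.X)) := by ring
    rw [hrearr]
    simp only [Polynomial.map_add, Polynomial.map_sub, Polynomial.map_mul, Polynomial.map_one,
      Polynomial.map_X, pmap_conj_conj, map_sub]
    simp only [map_add, map_smul, smul_add, aevmulS, ContinuousLinearMap.sub_apply,
      ContinuousLinearMap.add_apply]
    rw [commP2' p, commP2' f, prod2' y]
    simp only [map_add, map_smul, smul_add, aevmulS, ContinuousLinearMap.sub_apply,
      ContinuousLinearMap.add_apply, smul_smul, Complex.I_mul_I, neg_one_smul, neg_smul, one_smul]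
    abel
  -- the polynomial sequences
  set PF : ℕ → Polynomial ℂ × Polynomial ℂ := fun n => Nat.rec
      ((1 : Polynomial ℂ), (0 : Polynomial ℂ))
      (fun k ih => (Pp (k+1) * ih.1 - Qp (k+1) * (ih.2.map (starRingEnd ℂ)) *
          ((1 : Polynomial ℂ) - Polynomial.X) * Polynomial.X,
        Pp (k+1) * ih.2 + Qp (k+1) * (ih.1.map (starRingEnd ℂ)))) n with hPF
  have hPF1 : ∀ m : ℕ, (PF (m+1)).1 = Pp (m+1) * (PF m).1 -
      Qp (m+1) * ((PF m).2.map (starRingEnd ℂ)) * ((1 : Polynomial ℂ) - Polynomial.X) *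
      Polynomial.X := fun m => rfl
  have hPF2 : ∀ m : ℕ, (PF (m+1)).2 = Pp (m+1) * (PF m).2 +
      Qp (m+1) * ((PF m).1.map (starRingEnd ℂ)) := fun m => rfl
  refine ⟨fun n => (PF n).1, fun n => (PF n).2, rfl, rfl, ?_, ?_, ?_⟩
  · intro n hn
    cases n with
    | zero => exact absurd hn (by omega)
    | succ m => simpa using hPF1 m
  · intro n hn
    cases n with
    | zero => exact absurd hn (by omega)
    | succ m => simpa using hPF2 m
  · intro n
    induction n with
    | zero =>
        intro x y
        rw [hWn0]
        beta_reduce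
        have hPF0a : (PF 0).1 = 1 := rfl
        have hPF0b : (PF 0).2 = 0 := rfl
        rw [hPF0a, hPF0b]
        simp [Polynomial.map_one, Polynomial.map_zero, map_one, map_zero,
          ContinuousLinearMap.one_apply]
    | succ m ih =>
        intro x y
        beta_reduce
        rw [hWnS m, ContinuousLinearMap.comp_apply, ih x y]
        rw [hstep (m+1)]
        simp only [ContinuousLinearMap.smul_apply, ContinuousLinearMap.comp_apply]
        have h1 := comp1 (Pp (m+1)) (Qp (m+1)) ((PF m).1) ((PF m).2) x y
        have h2 := comp2 (Pp (m+1)) (Qp (m+1)) ((PF m).1) ((PF m).2) x y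
        exact congrArg₂ (fun (a : 𝔥) (b : 𝔥ᗮ) => (a : H) + (b : H)) h1 h2
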